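/- Let G be a real symmetric n×n matrix (playing the role of YYᵀ) and λ_G := (1ₙᵀG1ₙ − tr(G))/(n(n−1)). Let Ẑ ∈ M_opt satisfy ⟨G − λ_G·E_n, Ẑ⟩ ≥ ⟨G − λ_G·E_n, Z⟩ for all Z ∈ M_opt. Then pγ·w_min²·‖Ẑ − Z*‖₁ ≤ ⟨R, Z* − Ẑ⟩ ≤ ⟨G − Ḡ, Ẑ − Z*⟩ + ⟨B̄ − R, Ẑ − Z*⟩ − (λ_G − λ̄)·⟨E_n − I_n, Ẑ − Z*⟩. -/

import Mathlib

open Matrix Finset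

noncomputable section

def opNorm {k l : ℕ} (A : Matrix (Fin k) (Fin l) ℝ) : ℝ :=
  ‖(Matrix.toEuclideanLin A).toContinuousLinearMap‖

def ip {n : ℕ} (A B : Matrix (Fin n) (Fin n) ℝ) : ℝ := Matrix.trace (Aᵀ * B)

def ell1Norm {k l : ℕ} (M : Matrix (Fin k) (Fin l) ℝ) : ℝ := ∑ i, ∑ j, |M i j|

def frobNorm {k l : ℕ} (M : Matrix (Fin k) (Fin l) ℝ) : ℝ :=
  Real.sqrt (∑ i, ∑ j, (M i j) ^ 2)

def euclNorm {k : ℕ} (x : Fin k → ℝ) : ℝ := Real.sqrt (∑ i, x i ^ 2)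

def En (n : ℕ) : Matrix (Fin n) (Fin n) ℝ := Matrix.of fun _ _ => 1

def centering (n : ℕ) : Matrix (Fin n) (Fin n) ℝ := 1 - ((n : ℝ)⁻¹) • En n

def Mopt (n : ℕ) : Set (Matrix (Fin n) (Fin n) ℝ) :=
  {Z | Z.PosSemidef ∧ ∀ i, Z i i = 1}

def MGplus (n : ℕ) : Set (Matrix (Fin n) (Fin n) ℝ) :=
  {Z | Z.PosSemidef ∧ ∀ i, Z i i ≤ 1}

def MoptPlus (n : ℕ) : Set (Matrix (Fin n) (Fin n) ℝ) :=
  {Z | Z.PosSemidef ∧ (∀ i, Z i i = 1) ∧ ip (En n) Z = 0}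

def u2 (n n₁ : ℕ) : Fin n → ℝ := fun j => if (j : ℕ) < n₁ then 1 else -1

def Zstar (n n₁ : ℕ) : Matrix (Fin n) (Fin n) ℝ :=
  Matrix.vecMulVec (u2 n n₁) (u2 n n₁)

def wmin (n n₁ n₂ : ℕ) : ℝ := min ((n₁ : ℝ) / n) ((n₂ : ℝ) / n)

def vref (n n₁ n₂ : ℕ) : Fin n → ℝ :=
  fun j => if (j : ℕ) < n₁ then (n₂ : ℝ) / n else -((n₁ : ℝ) / n)

def Rmat (n n₁ n₂ p : ℕ) (γ : ℝ) : Matrix (Fin n) (Fin n) ℝ :=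
  ((p : ℝ) * γ) • Matrix.vecMulVec (vref n n₁ n₂) (vref n n₁ n₂)

def Dmat (n n₁ : ℕ) (V₁ V₂ : ℝ) : Matrix (Fin n) (Fin n) ℝ :=
  Matrix.diagonal fun j => if (j : ℕ) < n₁ then V₁ else V₂

def Gbar (n n₁ n₂ p : ℕ) (γ V₁ V₂ : ℝ) : Matrix (Fin n) (Fin n) ℝ :=
  centering n * Dmat n n₁ V₁ V₂ * centering n + Rmat n n₁ n₂ p γ

def taubar (n n₁ n₂ p : ℕ) (γ V₁ V₂ : ℝ) : ℝ :=
  Matrix.trace (Gbar n n₁ n₂ p γ V₁ V₂) / n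

def lambar (n n₁ n₂ p : ℕ) (γ V₁ V₂ : ℝ) : ℝ :=
  ((∑ i, ∑ j, Gbar n n₁ n₂ p γ V₁ V₂ i j) - Matrix.trace (Gbar n n₁ n₂ p γ V₁ V₂)) /
    ((n : ℝ) * ((n : ℝ) - 1))

def Bbar (n n₁ n₂ p : ℕ) (γ V₁ V₂ : ℝ) : Matrix (Fin n) (Fin n) ℝ :=
  Gbar n n₁ n₂ p γ V₁ V₂ - lambar n n₁ n₂ p γ V₁ V₂ • (En n - 1) -
    taubar n n₁ n₂ p γ V₁ V₂ • (1 : Matrix (Fin n) (Fin n) ℝ)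

def W0 (n n₁ n₂ : ℕ) (V₁ V₂ : ℝ) : Matrix (Fin n) (Fin n) ℝ :=
  Matrix.diagonal fun j => if (j : ℕ) < n₁ then (V₁ - V₂) * ((n₂ : ℝ) / n)
    else -((V₁ - V₂) * ((n₁ : ℝ) / n))

def blockDiagE (n n₁ : ℕ) : Matrix (Fin n) (Fin n) ℝ :=
  Matrix.of fun i j =>
    if (i : ℕ) < n₁ ∧ (j : ℕ) < n₁ then 1
    else if n₁ ≤ (i : ℕ) ∧ n₁ ≤ (j : ℕ) then -1 else 0

def W2m (n n₁ : ℕ) (V₁ V₂ : ℝ) : Matrix (Fin n) (Fin n) ℝ :=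
  ((V₁ - V₂) / n) • blockDiagE n n₁

def Wbb (n n₁ n₂ : ℕ) (V₁ V₂ : ℝ) : Matrix (Fin n) (Fin n) ℝ :=
  W2m n n₁ V₁ V₂ + ((V₁ - V₂) * ((n₂ : ℝ) / n - (n₁ : ℝ) / n) / n) • En n



lemma ip_sum {n : ℕ} (A B : Matrix (Fin n) (Fin n) ℝ) :
    ip A B = ∑ i, ∑ j, A i j * B i j := by
  simp only [ip, Matrix.trace, Matrix.diag, Matrix.mul_apply, Matrix.transpose_apply]
  rw [Finset.sum_comm]

lemma ip_sub_left {n : ℕ} (A B C : Matrix (Fin n) (Fin n) ℝ) :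
    ip (A - B) C = ip A C - ip B C := by
  simp [ip, Matrix.sub_mul, Matrix.transpose_sub]

lemma ip_sub_right {n : ℕ} (A B C : Matrix (Fin n) (Fin n) ℝ) :
    ip A (B - C) = ip A B - ip A C := by
  simp [ip, Matrix.mul_sub]

lemma ip_smul_left {n : ℕ} (c : ℝ) (A B : Matrix (Fin n) (Fin n) ℝ) :
    ip (c • A) B = c * ip A B := by
  simp [ip, Matrix.transpose_smul, Matrix.smul_mul]

lemma Zstar_mem (n n₁ : ℕ) : Zstar n n₁ ∈ Mopt n := by
  refine ⟨Matrix.posSemidef_iff_dotProduct_mulVec.mpr ⟨?_, ?_⟩, ?_⟩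
  · ext i j
    simp [Zstar, Matrix.vecMulVec_apply, mul_comm]
  · intro x
    have h : (Zstar n n₁) *ᵥ x = fun i => u2 n n₁ i * (∑ j, u2 n n₁ j * x j) := by
      ext i
      simp [Zstar, Matrix.mulVec, Matrix.vecMulVec_apply, dotProduct, Finset.mul_sum, mul_assoc]
    rw [h]
    have : dotProduct (star x) (fun i => u2 n n₁ i * (∑ j, u2 n n₁ j * x j))
        = (∑ j, u2 n n₁ j * x j) ^ 2 := by
      simp only [dotProduct, star_trivial, pow_two]
      have e : ∀ i : Fin n, x i * (u2 n n₁ i * (∑ j, u2 n n₁ j * x j))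
          = (u2 n n₁ i * x i) * (∑ j, u2 n n₁ j * x j) := fun i => by ring
      simp_rw [e]
      rw [← Finset.sum_mul]
    rw [this]; positivity
  · intro i
    by_cases h : (i : ℕ) < n₁ <;> simp [Zstar, Matrix.vecMulVec_apply, u2, h]

lemma entry_bound {n : ℕ} {Z : Matrix (Fin n) (Fin n) ℝ} (hZ : Z ∈ Mopt n)
    (i j : Fin n) : |Z i j| ≤ 1 := by
  obtain ⟨hZpsd, hdiag⟩ := hZ
  obtain ⟨hherm, hpsd⟩ := Matrix.posSemidef_iff_dotProduct_mulVec.mp hZpsd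
  have hsym : Z j i = Z i j := by
    have := congrFun (congrFun hherm.eq i) j
    simpa [Matrix.conjTranspose_apply] using this
  rcases eq_or_ne i j with rfl | hij
  · simp [hdiag i]
  · have quad : ∀ c : ℝ, 0 ≤ Z i i + c * Z i j + c * Z j i + c * c * Z j j := by
      intro c
      have := hpsd (Pi.single i 1 + Pi.single j c)
      simp only [star_trivial] at this
      have hmv : Z *ᵥ (Pi.single i 1 + Pi.single j c) = fun k => Z k i + c * Z k j := by
        ext k
        simp [Matrix.mulVec_add, Matrix.mulVec_single, mul_comm]
      rw [hmv] at this
      have hd : dotProduct (Pi.single i 1 + Pi.single j c) (fun k => Z k i + c * Z k j)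
          = Z i i + c * Z i j + c * Z j i + c * c * Z j j := by
        rw [add_dotProduct]
        rw [single_dotProduct, single_dotProduct]
        ring
      rw [hd] at this
      exact this
    have h1 := quad 1
    have h2 := quad (-1)
    rw [hdiag i, hdiag j, hsym] at h1 h2
    rw [abs_le]
    constructor <;> nlinarith


set_option maxHeartbeats 2000000 in
/-- the elementary inequality for any SDP1 maximizer `Ẑ ∈ M_opt`. -/
theorem elementary_inequality (n n₁ n₂ p : ℕ) (γ V₁ V₂ : ℝ)
    (hn : n = n₁ + n₂) (hn₁ : 0 < n₁) (hn₂ : 0 < n₂) (hp : 1 ≤ p) (hγ : 0 < γ)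
    (hn2 : 2 ≤ n)
    (G : Matrix (Fin n) (Fin n) ℝ) (hG : Gᵀ = G)
    (Zhat : Matrix (Fin n) (Fin n) ℝ) (hZhatMem : Zhat ∈ Mopt n)
    (hZhatMax : ∀ Z ∈ Mopt n,
      ip (G - (((∑ i, ∑ j, G i j) - Matrix.trace G) / ((n : ℝ) * ((n : ℝ) - 1))) • En n) Z ≤
      ip (G - (((∑ i, ∑ j, G i j) - Matrix.trace G) / ((n : ℝ) * ((n : ℝ) - 1))) • En n) Zhat) :
    (p : ℝ) * γ * (wmin n n₁ n₂) ^ 2 * ell1Norm (Zhat - Zstar n n₁) ≤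
      ip (Rmat n n₁ n₂ p γ) (Zstar n n₁ - Zhat) ∧
    ip (Rmat n n₁ n₂ p γ) (Zstar n n₁ - Zhat) ≤
      ip (G - Gbar n n₁ n₂ p γ V₁ V₂) (Zhat - Zstar n n₁) +
      ip (Bbar n n₁ n₂ p γ V₁ V₂ - Rmat n n₁ n₂ p γ) (Zhat - Zstar n n₁) -
      ((((∑ i, ∑ j, G i j) - Matrix.trace G) / ((n : ℝ) * ((n : ℝ) - 1))) -
        lambar n n₁ n₂ p γ V₁ V₂) * ip (En n - 1) (Zhat - Zstar n n₁) := by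
  set lG : ℝ := (((∑ i, ∑ j, G i j) - Matrix.trace G) / ((n : ℝ) * ((n : ℝ) - 1))) with hlG
  have hZs := Zstar_mem n n₁
  have hmax := hZhatMax (Zstar n n₁) hZs
  have hΔ0 : 0 ≤ ip (G - lG • En n) (Zhat - Zstar n n₁) := by
    rw [ip_sub_right]; linarith
  have hnpos : (0:ℝ) < n := by positivity
  have hI : ip (1 : Matrix (Fin n) (Fin n) ℝ) (Zhat - Zstar n n₁) = 0 := by
    have e : ∀ A : Matrix (Fin n) (Fin n) ℝ, ip (1 : Matrix (Fin n) (Fin n) ℝ) A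
        = Matrix.trace A := by
      intro A; simp [ip, Matrix.transpose_one]
    rw [ip_sub_right, e, e, Matrix.trace, Matrix.trace]
    have h1 : ∀ i : Fin n, Zhat.diag i = (Zstar n n₁).diag i := by
      intro i; simp [Matrix.diag, hZhatMem.2 i, hZs.2 i]
    rw [Finset.sum_congr rfl fun i _ => h1 i]; ring
  have key : ip (G - Gbar n n₁ n₂ p γ V₁ V₂) (Zhat - Zstar n n₁) +
      ip (Bbar n n₁ n₂ p γ V₁ V₂ - Rmat n n₁ n₂ p γ) (Zhat - Zstar n n₁) -
      (lG - lambar n n₁ n₂ p γ V₁ V₂) * ip (En n - 1) (Zhat - Zstar n n₁)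
      = ip (G - lG • En n) (Zhat - Zstar n n₁) +
        (lG - taubar n n₁ n₂ p γ V₁ V₂) *
          ip (1 : Matrix (Fin n) (Fin n) ℝ) (Zhat - Zstar n n₁) +
        ip (Rmat n n₁ n₂ p γ) (Zstar n n₁ - Zhat) := by
    simp only [Bbar, ip_sub_left, ip_sub_right, ip_smul_left]
    ring
  constructor
  · -- first inequality
    rw [ip_sum, ell1Norm]
    rw [Finset.mul_sum]
    refine Finset.sum_le_sum fun i _ => ?_
    rw [Finset.mul_sum]
    refine Finset.sum_le_sum fun j _ => ?_
    have hz := entry_bound hZhatMem i j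
    rw [abs_le] at hz
    obtain ⟨hzl, hzu⟩ := hz
    have ha : (0:ℝ) < (n₁ : ℝ) / n := by positivity
    have hb : (0:ℝ) < (n₂ : ℝ) / n := by positivity
    have hwa : wmin n n₁ n₂ ≤ (n₁ : ℝ) / n := min_le_left _ _
    have hwb : wmin n n₁ n₂ ≤ (n₂ : ℝ) / n := min_le_right _ _
    have hw0 : 0 ≤ wmin n n₁ n₂ := le_min ha.le hb.le
    have hpγ : (0:ℝ) ≤ (p : ℝ) * γ := by positivity
    rcases lt_or_ge (i : ℕ) n₁ with hi | hi <;> rcases lt_or_ge (j : ℕ) n₁ with hj | hj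
    · simp only [Rmat, Zstar, Matrix.vecMulVec_apply, u2, vref, Matrix.sub_apply,
        Matrix.smul_apply, smul_eq_mul, if_pos hi, if_pos hj]
      have hww : wmin n n₁ n₂ ^ 2 ≤ ((n₂:ℝ)/n) * ((n₂:ℝ)/n) := by
        rw [pow_two]; exact mul_le_mul hwb hwb hw0 hb.le
      have habs : |Zhat i j - 1 * 1| = 1 * 1 - Zhat i j := by
        rw [abs_of_nonpos] <;> linarith
      rw [habs]
      nlinarith [mul_le_mul_of_nonneg_left hww hpγ]
    · simp only [Rmat, Zstar, Matrix.vecMulVec_apply, u2, vref, Matrix.sub_apply,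
        Matrix.smul_apply, smul_eq_mul, if_pos hi, if_neg (not_lt.mpr hj)]
      have hww : wmin n n₁ n₂ ^ 2 ≤ ((n₁:ℝ)/n) * ((n₂:ℝ)/n) := by
        rw [pow_two]; exact mul_le_mul hwa hwb hw0 ha.le
      have habs : |Zhat i j - 1 * -1| = Zhat i j - 1 * -1 := by
        rw [abs_of_nonneg]; linarith
      rw [habs]
      nlinarith [mul_le_mul_of_nonneg_left hww hpγ]
    · simp only [Rmat, Zstar, Matrix.vecMulVec_apply, u2, vref, Matrix.sub_apply,
        Matrix.smul_apply, smul_eq_mul, if_neg (not_lt.mpr hi), if_pos hj]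
      have hww : wmin n n₁ n₂ ^ 2 ≤ ((n₁:ℝ)/n) * ((n₂:ℝ)/n) := by
        rw [pow_two]; exact mul_le_mul hwa hwb hw0 ha.le
      have habs : |Zhat i j - -1 * 1| = Zhat i j - -1 * 1 := by
        rw [abs_of_nonneg]; linarith
      rw [habs]
      nlinarith [mul_le_mul_of_nonneg_left hww hpγ]
    · simp only [Rmat, Zstar, Matrix.vecMulVec_apply, u2, vref, Matrix.sub_apply,
        Matrix.smul_apply, smul_eq_mul, if_neg (not_lt.mpr hi), if_neg (not_lt.mpr hj)]
      have hww : wmin n n₁ n₂ ^ 2 ≤ ((n₁:ℝ)/n) * ((n₁:ℝ)/n) := by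
        rw [pow_two]; exact mul_le_mul hwa hwa hw0 ha.le
      have habs : |Zhat i j - -1 * -1| = -1 * -1 - Zhat i j := by
        rw [abs_of_nonpos] <;> linarith
      rw [habs]
      nlinarith [mul_le_mul_of_nonneg_left hww hpγ]
  · -- second inequality
    rw [key, hI]
    linarith


end
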